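/- Let Ω be a real symmetric positive definite p × p matrix, C a real q × p matrix, L a real r × p matrix, and η > 0. If L Ω⁻¹ Cᵀ ≠ 0, then Ω + η CᵀC is positive definite and Tr(L (Ω + η CᵀC)⁻¹ Lᵀ) < Tr(L Ω⁻¹ Lᵀ). -/

import Mathlib

open Matrix

private lemma posSemidef_smul {n : ℕ} {A : Matrix (Fin n) (Fin n) ℝ} (hA : A.PosSemidef)
    {c : ℝ} (hc : 0 ≤ c) : (c • A).PosSemidef := by
  refine Matrix.PosSemidef.of_dotProduct_mulVec_nonneg (by simp only [Matrix.IsHermitian, conjTranspose_smul, hA.1.eq, star_trivial]) fun x => ?_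
  rw [smul_mulVec, dotProduct_smul]
  exact mul_nonneg hc (hA.dotProduct_mulVec_nonneg x)

private lemma posDef_smul_one {n : ℕ} {c : ℝ} (hc : 0 < c) :
    (c • (1 : Matrix (Fin n) (Fin n) ℝ)).PosDef := by
  refine Matrix.PosDef.of_dotProduct_mulVec_pos (by simp [Matrix.IsHermitian, conjTranspose_smul]) fun x hx => ?_
  rw [smul_mulVec, dotProduct_smul, one_mulVec]
  exact mul_pos hc (by simpa using dotProduct_star_self_pos_iff.mpr hx)

/-- **Strict decrease of the trace cost under information strengthening.**
If `Ω ≻ 0`, `η > 0` and `LΩ⁻¹Cᵀ ≠ 0`, then `Ω + ηCᵀC ≻ 0` and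
`Tr(L(Ω + ηCᵀC)⁻¹Lᵀ) < Tr(LΩ⁻¹Lᵀ)`. -/
theorem stmt_14 {p q r : ℕ} (Ω : Matrix (Fin p) (Fin p) ℝ) (hΩ : Ω.PosDef)
    (C : Matrix (Fin q) (Fin p) ℝ) (L : Matrix (Fin r) (Fin p) ℝ)
    (η : ℝ) (hη : 0 < η) (hLC : L * Ω⁻¹ * Cᵀ ≠ 0) :
    (Ω + η • (Cᵀ * C)).PosDef ∧
    (L * (Ω + η • (Cᵀ * C))⁻¹ * Lᵀ).trace < (L * Ω⁻¹ * Lᵀ).trace := by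
  have hCtC : (η • (Cᵀ * C)).PosSemidef :=
    posSemidef_smul (by simpa using posSemidef_conjTranspose_mul_self C) hη.le
  have hpd : (Ω + η • (Cᵀ * C)).PosDef := hΩ.add_posSemidef hCtC
  refine ⟨hpd, ?_⟩
  have hΩinv : Ω⁻¹.PosDef := hΩ.inv
  set K : Matrix (Fin q) (Fin q) ℝ := η⁻¹ • 1 + C * Ω⁻¹ * Cᵀ with hKdef
  have hKpd : K.PosDef :=
    (posDef_smul_one (inv_pos.mpr hη)).add_posSemidef
      (by simpa using hΩinv.posSemidef.mul_mul_conjTranspose_same C)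
  have hKinv : K⁻¹.PosDef := hKpd.inv
  -- Woodbury
  have hηinv : ((η : ℝ) • (1 : Matrix (Fin q) (Fin q) ℝ))⁻¹ = η⁻¹ • 1 := by
    apply inv_eq_right_inv
    rw [Matrix.smul_mul, Matrix.one_mul, smul_smul, mul_inv_cancel₀ hη.ne', one_smul]
  have hwood : (Ω + η • (Cᵀ * C))⁻¹
      = Ω⁻¹ - Ω⁻¹ * Cᵀ * K⁻¹ * C * Ω⁻¹ := by
    have h1 : Ω + η • (Cᵀ * C) = Ω + Cᵀ * (η • (1 : Matrix (Fin q) (Fin q) ℝ)) * C := by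
      rw [Matrix.mul_smul, Matrix.smul_mul, Matrix.mul_one]
    rw [h1, add_mul_mul_inv_eq_sub _ _ _ _ hΩ.isUnit
      (posDef_smul_one hη).isUnit
      (by rw [hηinv]; exact hKpd.isUnit), hηinv]
  -- the trace decrease
  set M := L * Ω⁻¹ * Cᵀ with hMdef
  have hsym : C * Ω⁻¹ * Lᵀ = Mᵀ := by
    have hs : Ω⁻¹ᵀ = Ω⁻¹ := (by simpa using hΩinv.1 : Ω⁻¹.IsSymm)
    rw [hMdef, transpose_mul, transpose_mul, transpose_transpose, hs]
    simp [Matrix.mul_assoc]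
  have hexpand : L * (Ω + η • (Cᵀ * C))⁻¹ * Lᵀ
      = L * Ω⁻¹ * Lᵀ - M * K⁻¹ * Mᵀ := by
    rw [hwood, Matrix.mul_sub, Matrix.sub_mul, hMdef]
    congr 1
    rw [← hsym]
    simp [Matrix.mul_assoc]
  rw [hexpand, trace_sub, sub_lt_self_iff]
  -- 0 < trace (M * K⁻¹ * Mᵀ)
  have hdiag : ∀ i, (M * K⁻¹ * Mᵀ) i i = (M i) ⬝ᵥ (K⁻¹ *ᵥ (M i)) := by
    intro i
    simp [Matrix.mul_apply, dotProduct, mulVec, Finset.mul_sum, Finset.sum_mul]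
    rw [Finset.sum_comm]
    congr 1; ext j; congr 1; ext k; ring
  obtain ⟨i, j, hij⟩ : ∃ i j, M i j ≠ 0 := by
    by_contra h
    push_neg at h
    exact hLC (by ext i j; exact h i j)
  have hrow : M i ≠ 0 := fun h => hij (by simp [h])
  rw [Matrix.trace]
  apply Finset.sum_pos'
  · intro k _
    rw [Matrix.diag_apply, hdiag k]
    simpa using hKinv.posSemidef.dotProduct_mulVec_nonneg (M k)
  · exact ⟨i, Finset.mem_univ i, by rw [Matrix.diag_apply, hdiag i]; simpa using hKinv.dotProduct_mulVec_pos hrow⟩
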